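/- Consider the rational vector system with a real symmetric m×m matrix A all of whose entries are strictly positive and damping vectors q_{ij} ∈ [0,∞)^m. If the spectral radius of A is equal to 1, then there exists a solution (v_n) that is periodic of prime period k: v_{n+k} = v_n for all n, and there is no positive integer d < k with v_{n+d} = v_n for all n. -/

import Mathlib

open Matrix

open scoped RealInnerProductSpace

lemma abs_mulVec_le {m : ℕ} (A : Matrix (Fin m) (Fin m) ℝ) (hposA : ∀ i j, 0 < A i j)
    (u : Fin m → ℝ) (i : Fin m) : |(A *ᵥ u) i| ≤ (A *ᵥ fun j => |u j|) i := by
  simp only [Matrix.mulVec, dotProduct]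
  refine (Finset.abs_sum_le_sum_abs _ _).trans (Finset.sum_le_sum fun j _ => ?_)
  rw [abs_mul, abs_of_pos (hposA i j)]

lemma quad_le_abs {m : ℕ} (A : Matrix (Fin m) (Fin m) ℝ) (hposA : ∀ i j, 0 < A i j)
    (u : Fin m → ℝ) :
    ∑ i, (A *ᵥ u) i * u i ≤ ∑ i, (A *ᵥ fun j => |u j|) i * |u i| := by
  refine Finset.sum_le_sum fun i _ => ?_
  calc (A *ᵥ u) i * u i ≤ |(A *ᵥ u) i * u i| := le_abs_self _
    _ = |(A *ᵥ u) i| * |u i| := abs_mul _ _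
    _ ≤ (A *ᵥ fun j => |u j|) i * |u i| :=
        mul_le_mul_of_nonneg_right (abs_mulVec_le A hposA u i) (abs_nonneg _)

lemma perron_exists {m : ℕ} (hm : 1 ≤ m) (A : Matrix (Fin m) (Fin m) ℝ)
    (hsymm : A.IsSymm) (hposA : ∀ i j, 0 < A i j) (hρ : spectralRadius ℝ A = 1) :
    ∃ w : Fin m → ℝ, (∀ i, 0 ≤ w i) ∧ w ≠ 0 ∧ A *ᵥ w = w := by
  haveI : NeZero m := ⟨by omega⟩
  have hA : A.IsHermitian := by
    ext i j
    simpa [Matrix.conjTranspose_apply] using (hsymm.apply j i).symm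
  have hT : (Matrix.toEuclideanLin A).IsSymmetric :=
    Matrix.isHermitian_iff_isSymmetric.1 hA
  set T : EuclideanSpace ℝ (Fin m) →L[ℝ] EuclideanSpace ℝ (Fin m) := hT.toSelfAdjoint.val
    with hTdef
  have hTsa : IsSelfAdjoint T := hT.toSelfAdjoint.prop
  have hTapp : ∀ x : EuclideanSpace ℝ (Fin m), T x = Matrix.toEuclideanLin A x := fun x => rfl
  have hRe : ∀ x : EuclideanSpace ℝ (Fin m), T.reApplyInnerSelf x
      = ∑ i, (A *ᵥ (WithLp.equiv 2 _ x)) i * (WithLp.equiv 2 _ x) i := by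
    intro x
    rw [ContinuousLinearMap.reApplyInnerSelf_apply, hTapp]
    simp [Matrix.toEuclideanLin_apply, PiLp.inner_apply, PiLp.toLp_apply]
    exact Finset.sum_congr rfl fun i _ => mul_comm _ _
  have hNorm : ∀ x : EuclideanSpace ℝ (Fin m),
      ‖x‖ ^ 2 = ∑ i, ((WithLp.equiv 2 _ x) i) ^ 2 := by
    intro x
    rw [← real_inner_self_eq_norm_sq, PiLp.inner_apply]
    simp [PiLp.inner_apply, sq]
  -- maximizer on the unit sphere
  obtain ⟨x₀, hx₀s, hmax⟩ : ∃ x₀ ∈ Metric.sphere (0 : EuclideanSpace ℝ (Fin m)) 1,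
      IsMaxOn T.reApplyInnerSelf (Metric.sphere (0 : EuclideanSpace ℝ (Fin m)) 1) x₀ :=
    (isCompact_sphere _ _).exists_isMaxOn (NormedSpace.sphere_nonempty.2 zero_le_one)
      T.reApplyInnerSelf_continuous.continuousOn
  have hx₀n : ‖x₀‖ = 1 := by simpa using hx₀s
  -- the componentwise absolute value of x₀
  set u₀ : Fin m → ℝ := WithLp.equiv 2 _ x₀ with hu₀
  set w : Fin m → ℝ := fun i => |u₀ i| with hw
  set xa : EuclideanSpace ℝ (Fin m) := (WithLp.equiv 2 (Fin m → ℝ)).symm w with hxa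
  have hxaw : WithLp.equiv 2 (Fin m → ℝ) xa = w := rfl
  have hxan : ‖xa‖ = 1 := by
    have h2 : ‖xa‖ ^ 2 = ‖x₀‖ ^ 2 := by
      rw [hNorm, hNorm, hxaw]
      exact Finset.sum_congr rfl fun i _ => by rw [hw]; rw [sq_abs]
    nlinarith [norm_nonneg xa, norm_nonneg x₀, hx₀n]
  have hxas : xa ∈ Metric.sphere (0 : EuclideanSpace ℝ (Fin m)) 1 := by
    simpa using hxan
  have hreax : T.reApplyInnerSelf x₀ ≤ T.reApplyInnerSelf xa := by
    rw [hRe, hRe, hxaw]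
    exact quad_le_abs A hposA u₀
  have hmaxa : IsMaxOn T.reApplyInnerSelf (Metric.sphere (0 : EuclideanSpace ℝ (Fin m)) 1) xa :=
    fun y hy => le_trans (hmax hy) hreax
  have hxane : xa ≠ 0 := by
    intro h; rw [h] at hxan; simp at hxan
  -- eigenvector
  set μ : ℝ := T.rayleighQuotient xa with hμ
  have heig : Module.End.HasEigenvector (T : EuclideanSpace ℝ (Fin m) →ₗ[ℝ] _) μ xa := by
    have := hTsa.hasEigenvector_of_isLocalExtrOn hxane (Or.inr (by rwa [hxan] : IsMaxOn T.reApplyInnerSelf (Metric.sphere (0 : EuclideanSpace ℝ (Fin m)) ‖xa‖) xa).localize)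
    simpa using this
  have hμval : μ = T.reApplyInnerSelf xa := by
    rw [hμ, ContinuousLinearMap.rayleighQuotient, hxan]; norm_num
  -- global bound
  have hle : ∀ x : EuclideanSpace ℝ (Fin m), T.reApplyInnerSelf x ≤ μ * ‖x‖ ^ 2 := by
    intro x
    rcases eq_or_ne x 0 with rfl | hx
    · simp [ContinuousLinearMap.reApplyInnerSelf_apply]
    · have hxn : (0:ℝ) < ‖x‖ := norm_pos_iff.2 hx
      have hs : (‖x‖⁻¹ • x) ∈ Metric.sphere (0 : EuclideanSpace ℝ (Fin m)) 1 := by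
        simp [norm_smul, abs_of_pos (inv_pos.2 hxn), inv_mul_cancel₀ hxn.ne']
      have h0 : T.reApplyInnerSelf (‖x‖⁻¹ • x) ≤ T.reApplyInnerSelf xa := hmaxa hs
      rw [T.reApplyInnerSelf_smul] at h0
      have h2 : ‖(‖x‖⁻¹ : ℝ)‖ ^ 2 = (‖x‖ ^ 2)⁻¹ := by
        rw [Real.norm_eq_abs, abs_of_pos (inv_pos.2 hxn)]
        field_simp
      rw [h2, ← hμval] at h0
      have this := h0
      calc T.reApplyInnerSelf x = ((‖x‖ ^ 2)⁻¹ * T.reApplyInnerSelf x) * ‖x‖ ^ 2 := by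
            field_simp
        _ ≤ μ * ‖x‖ ^ 2 := by
            apply mul_le_mul_of_nonneg_right this (by positivity)
  -- μ is positive
  have hμpos : 0 < μ := by
    set u : EuclideanSpace ℝ (Fin m) := (WithLp.equiv 2 (Fin m → ℝ)).symm (fun _ => 1) with hu
    have h1 : T.reApplyInnerSelf u = ∑ i, ∑ j, A i j := by
      rw [hRe]
      simp [hu, Matrix.mulVec, dotProduct, PiLp.toLp_apply]
    have h2 : (0:ℝ) < ∑ i, ∑ j, A i j := by
      apply Finset.sum_pos (fun i _ => Finset.sum_pos (fun j _ => hposA i j) Finset.univ_nonempty)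
        Finset.univ_nonempty
    have h3 : ‖u‖ ^ 2 = (m:ℝ) := by
      rw [hNorm]; simp [hu]
    have h4 := hle u
    rw [h1, h3] at h4
    nlinarith [h2, h4, (Nat.cast_pos (α := ℝ)).2 (by omega : 0 < m)]
  -- μ is in the spectrum of A
  have hμspec : μ ∈ spectrum ℝ A := by
    rw [← Matrix.spectrum_toEuclideanLin (𝕜 := ℝ) (A := A)]
    rw [← Module.End.hasEigenvalue_iff_mem_spectrum]
    exact Module.End.hasEigenvalue_of_hasEigenvector heig
  -- every spectral value is bounded by μ
  have hbound : ∀ ν ∈ spectrum ℝ A, |ν| ≤ μ := by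
    intro ν hν
    rw [← Matrix.spectrum_toEuclideanLin (𝕜 := ℝ) (A := A), ← Module.End.hasEigenvalue_iff_mem_spectrum] at hν
    obtain ⟨y, hy⟩ := hν.exists_hasEigenvector
    have hyv : Matrix.toEuclideanLin A y = ν • y := Module.End.mem_eigenspace_iff.1 hy.1
    set uy : Fin m → ℝ := WithLp.equiv 2 _ y with huy
    have hAy : A *ᵥ uy = ν • uy := by
      have := congrArg (WithLp.equiv 2 (Fin m → ℝ)) hyv
      rw [Matrix.toEuclideanLin_apply] at this
      exact (by simpa using this : A *ᵥ y.ofLp = ν • y.ofLp)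
    set ya : EuclideanSpace ℝ (Fin m) := (WithLp.equiv 2 (Fin m → ℝ)).symm (fun i => |uy i|)
      with hya
    have hSpos : (0:ℝ) < ∑ i, uy i ^ 2 := by
      have hne : uy ≠ 0 := by
        intro h
        apply hy.2
        have : WithLp.equiv 2 (Fin m → ℝ) y = 0 := h
        exact (WithLp.equiv 2 (Fin m → ℝ)).injective (by simpa using this)
      obtain ⟨i, hi⟩ := Function.ne_iff.1 hne
      refine Finset.sum_pos' (fun j _ => sq_nonneg _) ⟨i, Finset.mem_univ i, pow_pos (abs_pos.2 hi) 2 |>.trans_eq (by rw [sq_abs])⟩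
    have key : |ν| * ∑ i, uy i ^ 2 ≤ μ * ∑ i, uy i ^ 2 := by
      have h5 : |ν| * ∑ i, uy i ^ 2 = ∑ i, |ν * uy i| * |uy i| := by
        rw [Finset.mul_sum]
        refine Finset.sum_congr rfl fun i _ => ?_
        rw [abs_mul, ← sq_abs]
        ring
      have h6 : ∀ i, |ν * uy i| = |(A *ᵥ uy) i| := fun i => by
        rw [hAy]; simp
      have h7 : ∑ i, |ν * uy i| * |uy i| ≤ ∑ i, (A *ᵥ fun j => |uy j|) i * |uy i| := by
        refine Finset.sum_le_sum fun i _ => ?_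
        rw [h6 i]
        exact mul_le_mul_of_nonneg_right (abs_mulVec_le A hposA uy i) (abs_nonneg _)
      have h8 : ∑ i, (A *ᵥ fun j => |uy j|) i * |uy i| = T.reApplyInnerSelf ya := by
        rw [hRe]
        exact Finset.sum_congr rfl fun i _ => rfl
      have h9 : ‖ya‖ ^ 2 = ∑ i, uy i ^ 2 := by
        rw [hNorm]
        refine Finset.sum_congr rfl fun i _ => ?_
        show |uy i| ^ 2 = uy i ^ 2
        rw [sq_abs]
      have := hle ya
      rw [h9] at this
      calc |ν| * ∑ i, uy i ^ 2 = ∑ i, |ν * uy i| * |uy i| := h5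
        _ ≤ ∑ i, (A *ᵥ fun j => |uy j|) i * |uy i| := h7
        _ = T.reApplyInnerSelf ya := h8
        _ ≤ μ * ∑ i, uy i ^ 2 := this
    exact le_of_mul_le_mul_right (by simpa [mul_comm] using key) hSpos
  -- conclude μ = 1
  have hμ1 : μ = 1 := by
    have hub : spectralRadius ℝ A ≤ ‖μ‖₊ := by
      rw [spectralRadius]
      refine iSup₂_le fun ν hν => ?_
      have : ‖ν‖₊ ≤ ‖μ‖₊ := by
        rw [← NNReal.coe_le_coe]
        simpa [Real.norm_eq_abs, abs_of_pos hμpos] using hbound ν hν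
      exact_mod_cast this
    have hlb : (‖μ‖₊ : ENNReal) ≤ spectralRadius ℝ A := by
      rw [spectralRadius]
      exact le_iSup₂ (f := fun k (_ : k ∈ spectrum ℝ A) => (‖k‖₊ : ENNReal)) μ hμspec
    rw [hρ] at hub hlb
    have : (‖μ‖₊ : ENNReal) = 1 := le_antisymm hlb hub
    have h1 : ‖μ‖₊ = 1 := by exact_mod_cast this
    have : |μ| = 1 := by
      have := congrArg (NNReal.toReal) h1
      simpa [Real.norm_eq_abs] using this
    rw [abs_of_pos hμpos] at this
    exact this
  -- conclude
  refine ⟨w, fun i => abs_nonneg _, ?_, ?_⟩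
  · intro h
    apply hxane
    rw [hxa, h]
    rfl
  · have h1 := Module.End.mem_eigenspace_iff.1 heig.1
    rw [hμ1, one_smul] at h1
    have h3 : Matrix.toEuclideanLin A xa = xa := h1
    have h4 := congrArg (WithLp.equiv 2 (Fin m → ℝ)) h3
    rw [Matrix.toEuclideanLin_apply] at h4
    simpa [hxa] using h4

/-- `v` is a solution of the rational vector system
`v_{n,i} = (A v_{n−k})_i / (1 + Σ_{j=1}^{k−1} ⟨q_{ij}, v_{n−j}⟩)` for `n ≥ k`,
with nonnegative values. -/
def IsRationalSolution {m : ℕ} (k : ℕ) (A : Matrix (Fin m) (Fin m) ℝ)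
    (q : Fin m → ℕ → Fin m → ℝ) (v : ℕ → Fin m → ℝ) : Prop :=
  (∀ n i, 0 ≤ v n i) ∧
  ∀ n, k ≤ n → ∀ i,
    v n i = (A *ᵥ v (n - k)) i / (1 + ∑ j ∈ Finset.Ico 1 k, (q i j) ⬝ᵥ v (n - j))

/-- Rational vector system with real symmetric `A` having strictly
positive entries and nonnegative damping vectors. If the spectral radius of `A` equals
`1`, then there exists a solution which is periodic of prime period `k`. -/
theorem stmt_11 {m k : ℕ} (hm : 1 ≤ m) (hk : 2 ≤ k)
    (A : Matrix (Fin m) (Fin m) ℝ) (hsymm : A.IsSymm) (hposA : ∀ i j, 0 < A i j)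
    (q : Fin m → ℕ → Fin m → ℝ) (hq : ∀ i j l, 0 ≤ q i j l)
    (hρ : spectralRadius ℝ A = 1) :
    ∃ v : ℕ → Fin m → ℝ, IsRationalSolution k A q v ∧
      (∀ n, v (n + k) = v n) ∧
      ¬ ∃ d : ℕ, 0 < d ∧ d < k ∧ ∀ n, v (n + d) = v n := by
  classical
  obtain ⟨w, hw0, hwne, hwA⟩ := perron_exists hm A hsymm hposA hρ
  refine ⟨fun n => if k ∣ n then w else 0, ⟨?_, ?_⟩, ?_, ?_⟩
  · intro n i
    dsimp only
    split
    · exact hw0 i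
    · exact le_refl 0
  · intro n hn i
    dsimp only
    by_cases hd : k ∣ n
    · have hd' : k ∣ n - k := Nat.dvd_sub hd dvd_rfl
      have hnd : ∀ j ∈ Finset.Ico 1 k, ¬ k ∣ n - j := by
        intro j hj hjd
        rw [Finset.mem_Ico] at hj
        have hjn : j ≤ n := le_trans hj.2.le hn
        have h2 : k ∣ n - (n - j) := Nat.dvd_sub hd hjd
        rw [Nat.sub_sub_self hjn] at h2
        have := Nat.le_of_dvd (by omega) h2
        omega
      rw [if_pos hd, if_pos hd',
        Finset.sum_congr rfl (fun j hj => by rw [if_neg (hnd j hj)])]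
      simp [hwA]
    · have hd' : ¬ k ∣ n - k := by
        intro h
        apply hd
        have h2 := Nat.sub_add_cancel hn
        rw [← h2]
        exact Nat.dvd_add h dvd_rfl
      rw [if_neg hd, if_neg hd']
      simp
  · intro n
    simp [Nat.dvd_add_self_right]
  · rintro ⟨d, hd0, hdk, hper⟩
    have h1 := hper 0
    rw [zero_add] at h1
    have hnd : ¬ k ∣ d := fun h => by have := Nat.le_of_dvd hd0 h; omega
    simp only [if_neg hnd, if_pos (dvd_zero k)] at h1
    exact hwne h1.symm
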